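/- Let K_Λ = {k ∈ ℝ^Λ : ∑_{i∈Λ} k_i = 0}. For all k ∈ K_Λ, writing k_{0ᶜ} = (k_i)_{i∈Λ∖{0}}, one has −4 k_{0ᶜ}ᵀ (Δ_{0ᶜ0ᶜ})^{−1} k_{0ᶜ} = kᵀ G k. -/
import Mathlib


open Matrix Filter

/-- The discrete two-dimensional torus `(ℤ/Nℤ)²`. -/
abbrev Torus (N : ℕ) := ZMod N × ZMod N

/-- The four nearest-neighbor steps on the torus. -/
def torusSteps (N : ℕ) : List (Torus N) := [(1, 0), (-1, 0), (0, 1), (0, -1)]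

/-- One-step transition kernel of simple random walk on the torus:
each of the four steps is taken with probability `1/4`. -/
noncomputable def srwKernel (N : ℕ) : Matrix (Torus N) (Torus N) ℝ :=
  fun i j => ((torusSteps N).count (j - i) : ℝ) / 4

/-- The lattice Laplacian on the torus: `Δ_ij = 1` for neighbors `i ∼ j`
(counted with multiplicity), `Δ_ii = -4`, and `0` otherwise. -/
noncomputable def lap (N : ℕ) : Matrix (Torus N) (Torus N) ℝ :=
  fun i j => if i = j then -4 else ((torusSteps N).count (j - i) : ℝ)

/-- The Green's function
`G_ij = lim_{λ↓0} ∑_{t≥0} (P_i(X_t = j) − 1/|Λ|) e^{−λt}` of simple random walk. -/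
noncomputable def green (N : ℕ) [NeZero N] (i j : Torus N) : ℝ :=
  limUnder (nhdsWithin (0 : ℝ) (Set.Ioi 0))
    (fun lam : ℝ =>
      ∑' t : ℕ, ((srwKernel N ^ t) i j - 1 / (N ^ 2 : ℝ)) * Real.exp (-lam * t))

section aux
variable {N : ℕ} [NeZero N]
set_option linter.unusedSectionVars false

lemma count_mul_sum {α : Type*} [Fintype α] [DecidableEq α] [BEq α] [LawfulBEq α] (l : List α) (g : α → ℝ) :
    ∑ v, (l.count v : ℝ) * g v = (l.map g).sum := by
  induction l with
  | nil => simp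
  | cons a l ih =>
    simp only [List.count_cons, List.map_cons, List.sum_cons, beq_iff_eq]
    push_cast
    simp only [add_mul, ite_mul, one_mul, zero_mul]
    rw [Finset.sum_add_distrib, ih, Finset.sum_ite_eq]
    simp [add_comm]

lemma steps_sum (i : Torus N) (g : Torus N → ℝ) :
    ∑ j, ((torusSteps N).count (j - i) : ℝ) * g j =
      g (i + (1, 0)) + g (i + (-1, 0)) + g (i + (0, 1)) + g (i + (0, -1)) := by
  have h : ∑ j, ((torusSteps N).count (j - i) : ℝ) * g j
      = ∑ v, ((torusSteps N).count v : ℝ) * g (i + v) :=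
    (Fintype.sum_equiv (Equiv.addLeft i) _ _ (fun v => by simp)).symm
  rw [h]
  refine (count_mul_sum (torusSteps N) (fun v => g (i + v))).trans ?_
  simp only [torusSteps, List.map_cons, List.map_nil, List.sum_cons, List.sum_nil]
  ring

lemma sum_counts (i : Torus N) : ∑ j, ((torusSteps N).count (j - i) : ℝ) = 4 := by
  have h := steps_sum i (fun _ => (1 : ℝ))
  norm_num at h
  convert h using 1 <;> norm_num

lemma counts_total : ∑ v, ((torusSteps N).count v : ℝ) = 4 := by
  simpa using sum_counts (0 : Torus N)

lemma col_counts (j : Torus N) : ∑ i, ((torusSteps N).count (j - i) : ℝ) = 4 := by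
  have h : ∑ i, ((torusSteps N).count (j - i) : ℝ) = ∑ v, ((torusSteps N).count v : ℝ) :=
    (Fintype.sum_equiv (Equiv.subLeft j) _ _ (fun v => by simp)).symm
  rw [h, counts_total]

lemma P_nonneg (i j : Torus N) : 0 ≤ srwKernel N i j := by
  unfold srwKernel; positivity

lemma P_row (i : Torus N) : ∑ j, srwKernel N i j = 1 := by
  unfold srwKernel
  rw [← Finset.sum_div, sum_counts]; norm_num

lemma P_col (j : Torus N) : ∑ i, srwKernel N i j = 1 := by
  unfold srwKernel
  rw [← Finset.sum_div, col_counts]; norm_num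

lemma Ppow_nonneg (t : ℕ) (i j : Torus N) : 0 ≤ (srwKernel N ^ t) i j := by
  induction t generalizing i j with
  | zero => simp [Matrix.one_apply]; positivity
  | succ t ih =>
    rw [pow_succ, Matrix.mul_apply]
    exact Finset.sum_nonneg fun m _ => mul_nonneg (ih i m) (P_nonneg m j)

lemma Ppow_row (t : ℕ) (i : Torus N) : ∑ j, (srwKernel N ^ t) i j = 1 := by
  induction t generalizing i with
  | zero => simp [Matrix.one_apply]
  | succ t ih =>
    simp only [pow_succ, Matrix.mul_apply]
    rw [Finset.sum_comm]
    calc ∑ m, ∑ j, (srwKernel N ^ t) i m * srwKernel N m j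
        = ∑ m, (srwKernel N ^ t) i m := by
          refine Finset.sum_congr rfl fun m _ => ?_
          rw [← Finset.mul_sum, P_row, mul_one]
      _ = 1 := ih i

lemma Ppow_col (t : ℕ) (j : Torus N) : ∑ i, (srwKernel N ^ t) i j = 1 := by
  induction t generalizing j with
  | zero => simp [Matrix.one_apply]
  | succ t ih =>
    simp only [pow_succ, Matrix.mul_apply]
    rw [Finset.sum_comm]
    calc ∑ m, ∑ i, (srwKernel N ^ t) i m * srwKernel N m j
        = ∑ m, srwKernel N m j := by
          refine Finset.sum_congr rfl fun m _ => ?_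
          rw [← Finset.sum_mul, ih, one_mul]
      _ = 1 := P_col j

lemma Ppow_le_one (t : ℕ) (i j : Torus N) : (srwKernel N ^ t) i j ≤ 1 := by
  calc (srwKernel N ^ t) i j ≤ ∑ m, (srwKernel N ^ t) i m :=
        Finset.single_le_sum (fun m _ => Ppow_nonneg t i m) (Finset.mem_univ j)
    _ = 1 := Ppow_row t i

noncomputable def Pim (N : ℕ) : Matrix (Torus N) (Torus N) ℝ := fun _ _ => 1 / (N ^ 2 : ℝ)

lemma card_torus : Fintype.card (Torus N) = N ^ 2 := by
  simp [Fintype.card_prod, ZMod.card, sq]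

lemma Pim_mul_Ppow (t : ℕ) : Pim N * srwKernel N ^ t = Pim N := by
  ext i j
  simp only [Matrix.mul_apply, Pim]
  rw [← Finset.mul_sum, Ppow_col, mul_one]

lemma Ppow_mul_Pim (t : ℕ) : srwKernel N ^ t * Pim N = Pim N := by
  ext i j
  simp only [Matrix.mul_apply, Pim]
  rw [← Finset.sum_mul, Ppow_row, one_mul]

lemma Pim_mul_Pim : Pim N * Pim N = Pim N := by
  ext i j
  simp only [Matrix.mul_apply, Pim, div_mul_div_comm, one_mul, ← Finset.sum_div,
    Finset.sum_const, Finset.card_univ, card_torus, nsmul_eq_mul]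
  have hN : ((N : ℝ) ^ 2) ≠ 0 := by
    have := NeZero.ne N
    positivity
  push_cast
  field_simp

lemma count_zero_steps (hN : 2 ≤ N) : ((torusSteps N).count (0 : Torus N) : ℝ) = 0 := by
  haveI : Fact (1 < N) := ⟨hN⟩
  have h1 : (1 : ZMod N) ≠ 0 := one_ne_zero
  have h2 : (-1 : ZMod N) ≠ 0 := by simpa [neg_eq_zero] using h1
  norm_cast
  simp only [torusSteps, List.count_cons, List.count_nil, beq_iff_eq, Prod.ext_iff]
  simp [h1.symm, h2.symm, (show ((0:Torus N)).1 = 0 from rfl)]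

lemma lap_apply (hN : 2 ≤ N) (i j : Torus N) :
    lap N i j = ((torusSteps N).count (j - i) : ℝ) + (if i = j then (-4 : ℝ) else 0) := by
  unfold lap
  by_cases h : i = j
  · subst h; simp [count_zero_steps hN]
  · simp [h]

lemma lap_mulVec (hN : 2 ≤ N) (x : Torus N → ℝ) (i : Torus N) :
    (lap N).mulVec x i =
      x (i + (1, 0)) + x (i + (-1, 0)) + x (i + (0, 1)) + x (i + (0, -1)) - 4 * x i := by
  unfold Matrix.mulVec dotProduct
  calc ∑ j, lap N i j * x j
      = ∑ j, (((torusSteps N).count (j - i) : ℝ) * x j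
          + (if i = j then (-4 : ℝ) * x j else 0)) := by
        refine Finset.sum_congr rfl fun j _ => ?_
        rw [lap_apply hN]
        by_cases h : i = j <;> simp [h] <;> ring
    _ = _ := by
        rw [Finset.sum_add_distrib, steps_sum, Finset.sum_ite_eq]
        simp; ring

lemma sum_shift_sq (x : Torus N → ℝ) (s : Torus N) :
    ∑ i, x (i + s) ^ 2 = ∑ i, x i ^ 2 :=
  Fintype.sum_equiv (Equiv.addRight s) _ _ (fun i => rfl)

lemma quad_form (hN : 2 ≤ N) (x : Torus N → ℝ) :
    x ⬝ᵥ (lap N).mulVec x =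
      -(1/2) * ∑ i, ((x (i + (1, 0)) - x i) ^ 2 + (x (i + (-1, 0)) - x i) ^ 2
        + (x (i + (0, 1)) - x i) ^ 2 + (x (i + (0, -1)) - x i) ^ 2) := by
  have hL : x ⬝ᵥ (lap N).mulVec x
      = (∑ i, x i * (x (i + (1, 0)) + x (i + (-1, 0)) + x (i + (0, 1)) + x (i + (0, -1))))
        - 4 * ∑ i, x i ^ 2 := by
    unfold dotProduct
    rw [Finset.mul_sum, ← Finset.sum_sub_distrib]
    refine Finset.sum_congr rfl fun i _ => ?_
    rw [lap_mulVec hN]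
    ring
  have hR : ∑ i, ((x (i + (1, 0)) - x i) ^ 2 + (x (i + (-1, 0)) - x i) ^ 2
        + (x (i + (0, 1)) - x i) ^ 2 + (x (i + (0, -1)) - x i) ^ 2)
      = (∑ i, x (i + (1, 0)) ^ 2) + (∑ i, x (i + (-1, 0)) ^ 2) + (∑ i, x (i + (0, 1)) ^ 2)
        + (∑ i, x (i + (0, -1)) ^ 2) + 4 * (∑ i, x i ^ 2)
        - 2 * ∑ i, x i * (x (i + (1, 0)) + x (i + (-1, 0)) + x (i + (0, 1)) + x (i + (0, -1))) := by
    rw [Finset.mul_sum, Finset.mul_sum, ← Finset.sum_add_distrib, ← Finset.sum_add_distrib,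
      ← Finset.sum_add_distrib, ← Finset.sum_add_distrib, ← Finset.sum_sub_distrib]
    refine Finset.sum_congr rfl fun i _ => ?_
    ring
  rw [hL, hR, sum_shift_sq, sum_shift_sq, sum_shift_sq, sum_shift_sq]
  ring

lemma const_of_shifts (f : Torus N → ℝ) (h1 : ∀ v, f (v + (1, 0)) = f v)
    (h2 : ∀ v, f (v + (0, 1)) = f v) (v : Torus N) : f v = f 0 := by
  have key : ∀ (g : Torus N), (∀ w, f (w + g) = f w) → ∀ (n : ℕ) (w), f (w + n • g) = f w := by
    intro g hg n
    induction n with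
    | zero => simp
    | succ n ih =>
      intro w
      rw [succ_nsmul, ← add_assoc, hg, ih]
  have hv : v = (0 : Torus N) + v.1.val • ((1 : ZMod N), (0 : ZMod N))
      + v.2.val • ((0 : ZMod N), (1 : ZMod N)) := by
    ext <;> simp [Prod.smul_def, ZMod.natCast_val, ZMod.cast_id]
  rw [hv, key _ h2, key _ h1]

lemma P_mulVec (x : Torus N → ℝ) (i : Torus N) :
    (srwKernel N).mulVec x i =
      (x (i + (1, 0)) + x (i + (-1, 0)) + x (i + (0, 1)) + x (i + (0, -1))) / 4 := by
  have h : (srwKernel N).mulVec x i = ∑ j, ((torusSteps N).count (j - i) : ℝ) / 4 * x j := rfl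
  rw [h]
  rw [Finset.sum_congr rfl (fun j _ => by ring :
    ∀ j ∈ Finset.univ, ((torusSteps N).count (j - i) : ℝ) / 4 * x j
      = ((torusSteps N).count (j - i) : ℝ) * x j / 4)]
  rw [← Finset.sum_div, steps_sum]

lemma eq_const_of_quad_zero (hN : 2 ≤ N) (x : Torus N → ℝ)
    (h : x ⬝ᵥ (lap N).mulVec x = 0) : ∀ v, x v = x 0 := by
  rw [quad_form hN] at h
  have h' : ∑ i, ((x (i + (1, 0)) - x i) ^ 2 + (x (i + (-1, 0)) - x i) ^ 2
      + (x (i + (0, 1)) - x i) ^ 2 + (x (i + (0, -1)) - x i) ^ 2) = 0 := by linarith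
  have hterm := (Finset.sum_eq_zero_iff_of_nonneg (fun i _ => by positivity)).1 h'
  have h1 : ∀ v, x (v + (1, 0)) = x v := by
    intro v
    have := hterm v (Finset.mem_univ v)
    nlinarith [sq_nonneg (x (v + (1, 0)) - x v), sq_nonneg (x (v + (-1, 0)) - x v),
      sq_nonneg (x (v + (0, 1)) - x v), sq_nonneg (x (v + (0, -1)) - x v)]
  have h2 : ∀ v, x (v + (0, 1)) = x v := by
    intro v
    have := hterm v (Finset.mem_univ v)
    nlinarith [sq_nonneg (x (v + (1, 0)) - x v), sq_nonneg (x (v + (-1, 0)) - x v),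
      sq_nonneg (x (v + (0, 1)) - x v), sq_nonneg (x (v + (0, -1)) - x v)]
  exact const_of_shifts x h1 h2

lemma sum_P_mulVec (x : Torus N → ℝ) : ∑ i, (srwKernel N).mulVec x i = ∑ j, x j := by
  unfold Matrix.mulVec dotProduct
  rw [Finset.sum_comm]
  exact Finset.sum_congr rfl fun j _ => by rw [← Finset.sum_mul, P_col, one_mul]

lemma harmonic_eq_zero (hN : 2 ≤ N) (x : Torus N → ℝ)
    (hP : ∀ i, x i = (srwKernel N).mulVec x i) (hs : ∑ i, x i = 0) : x = 0 := by
  have hlap : (lap N).mulVec x = 0 := by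
    funext i
    have h1 := lap_mulVec hN x i
    have h2 := P_mulVec x i
    have h3 := hP i
    simp only [Pi.zero_apply]
    rw [h1]
    rw [h2] at h3
    linarith
  have hq : x ⬝ᵥ (lap N).mulVec x = 0 := by rw [hlap]; simp
  have hc := eq_const_of_quad_zero hN x hq
  have : ∑ i, x i = (Fintype.card (Torus N) : ℝ) * x 0 := by
    rw [Finset.sum_congr rfl fun i _ => hc i]
    simp [Finset.card_univ, mul_comm]
  rw [hs] at this
  have hcard : (0 : ℝ) < (Fintype.card (Torus N) : ℝ) := by
    have : 0 < Fintype.card (Torus N) := Fintype.card_pos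
    exact_mod_cast this
  have hx0 : x 0 = 0 := by
    rcases mul_eq_zero.1 this.symm with h | h
    · exact absurd h hcard.ne'
    · exact h
  funext v
  rw [hc v, hx0]
  rfl

lemma Pim_mulVec (x : Torus N → ℝ) (i : Torus N) :
    (Pim N).mulVec x i = (∑ j, x j) / (N ^ 2 : ℝ) := by
  have h : (Pim N).mulVec x i = ∑ j, 1 / (N ^ 2 : ℝ) * x j := rfl
  rw [h, ← Finset.mul_sum, one_div_mul_eq_div]

lemma Bker (hN : 2 ≤ N) {c : ℝ} (hc0 : 0 ≤ c) (hc1 : c ≤ 1) (x : Torus N → ℝ)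
    (hx : ((1 : Matrix (Torus N) (Torus N) ℝ) - c • (srwKernel N - Pim N)).mulVec x = 0) :
    x = 0 := by
  have hNpos : (0 : ℝ) < (N ^ 2 : ℝ) := by
    have := NeZero.pos N
    positivity
  have hx1 : ∀ i, x i = c * ((srwKernel N).mulVec x i - (Pim N).mulVec x i) := by
    intro i
    have h := congrFun hx i
    rw [Matrix.sub_mulVec, Matrix.smul_mulVec, Matrix.sub_mulVec, Matrix.one_mulVec] at h
    simp only [Pi.sub_apply, Pi.smul_apply, Pi.zero_apply, smul_eq_mul] at h
    linarith
  have hsum : ∑ i, x i = 0 := by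
    have h : ∑ i, x i = c * ((∑ j, x j) - ∑ j, x j) := by
      calc ∑ i, x i = ∑ i, c * ((srwKernel N).mulVec x i - (Pim N).mulVec x i) :=
            Finset.sum_congr rfl fun i _ => hx1 i
        _ = c * ((∑ i, (srwKernel N).mulVec x i) - ∑ i, (Pim N).mulVec x i) := by
            rw [← Finset.mul_sum, Finset.sum_sub_distrib]
        _ = c * ((∑ j, x j) - ∑ j, x j) := by
            rw [sum_P_mulVec]
            congr 1
            congr 1
            rw [Finset.sum_congr rfl fun i _ => Pim_mulVec x i]
            rw [Finset.sum_const, Finset.card_univ, card_torus, nsmul_eq_mul]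
            push_cast
            field_simp
    simpa using h
  have hPim0 : ∀ i, (Pim N).mulVec x i = 0 := by
    intro i
    rw [Pim_mulVec, hsum, zero_div]
  have hxP : ∀ i, x i = c * (srwKernel N).mulVec x i := by
    intro i
    rw [hx1 i, hPim0 i, sub_zero]
  rcases eq_or_lt_of_le hc1 with hc | hc
  · -- c = 1
    subst hc
    refine harmonic_eq_zero hN x (fun i => ?_) hsum
    rw [hxP i, one_mul]
  · -- c < 1 : maximum principle
    by_contra hne
    obtain ⟨i0, _, hi0⟩ := Finset.exists_max_image Finset.univ (fun i => |x i|)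
      ⟨0, Finset.mem_univ 0⟩
    have hM : 0 < |x i0| := by
      rcases Function.ne_iff.1 hne with ⟨v, hv⟩
      have : 0 < |x v| := abs_pos.2 hv
      exact lt_of_lt_of_le this (hi0 v (Finset.mem_univ v))
    have hb : |x i0| ≤ c * |x i0| := by
      calc |x i0| = |c * (srwKernel N).mulVec x i0| := by rw [← hxP i0]
        _ = c * |(srwKernel N).mulVec x i0| := by
            rw [abs_mul, abs_of_nonneg hc0]
        _ ≤ c * ∑ j, srwKernel N i0 j * |x j| := by
            refine mul_le_mul_of_nonneg_left ?_ hc0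
            calc |∑ j, srwKernel N i0 j * x j| ≤ ∑ j, |srwKernel N i0 j * x j| :=
                  Finset.abs_sum_le_sum_abs _ _
              _ = ∑ j, srwKernel N i0 j * |x j| := by
                  refine Finset.sum_congr rfl fun j _ => ?_
                  rw [abs_mul, abs_of_nonneg (P_nonneg i0 j)]
        _ ≤ c * ∑ j, srwKernel N i0 j * |x i0| := by
            refine mul_le_mul_of_nonneg_left ?_ hc0
            exact Finset.sum_le_sum fun j _ =>
              mul_le_mul_of_nonneg_left (hi0 j (Finset.mem_univ j)) (P_nonneg i0 j)
        _ = c * |x i0| := by rw [← Finset.sum_mul, P_row, one_mul]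
    nlinarith

lemma Bdet (hN : 2 ≤ N) {c : ℝ} (hc0 : 0 ≤ c) (hc1 : c ≤ 1) :
    IsUnit ((1 : Matrix (Torus N) (Torus N) ℝ) - c • (srwKernel N - Pim N)).det := by
  rw [isUnit_iff_ne_zero]
  intro hdet
  obtain ⟨v, hv, hv0⟩ := (Matrix.exists_mulVec_eq_zero_iff).2 hdet
  exact hv (Bker hN hc0 hc1 v hv0)

lemma lapSub_det (hN : 2 ≤ N) :
    IsUnit (Matrix.det
      (fun i j : {v : Torus N // v ≠ 0} => lap N (i : Torus N) (j : Torus N))) := by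
  set Δ0 : Matrix {v : Torus N // v ≠ 0} {v : Torus N // v ≠ 0} ℝ :=
    fun i j => lap N (i : Torus N) (j : Torus N) with hΔ0
  rw [isUnit_iff_ne_zero]
  intro hdet
  obtain ⟨v, hv, hv0⟩ := (Matrix.exists_mulVec_eq_zero_iff).2 hdet
  set x : Torus N → ℝ := fun i => if h : i = 0 then 0 else v ⟨i, h⟩ with hxdef
  have hx0 : x 0 = 0 := by simp [hxdef]
  have hxv : ∀ j : {w : Torus N // w ≠ 0}, x (j : Torus N) = v j := fun j => dif_neg j.2
  have hlapx : ∀ i : Torus N, i ≠ 0 → (lap N).mulVec x i = 0 := by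
    intro i hi
    have h1 : (lap N).mulVec x i = ∑ j, lap N i j * x j := rfl
    have h2 : ∑ j ∈ Finset.univ.erase 0, lap N i j * x j + lap N i 0 * x 0
        = ∑ j, lap N i j * x j := Finset.sum_erase_add _ _ (Finset.mem_univ 0)
    have h3 : ∑ j ∈ Finset.univ.erase 0, lap N i j * x j
        = ∑ j : {w : Torus N // w ≠ 0}, lap N i (j : Torus N) * x (j : Torus N) :=
      Finset.sum_subtype _ (fun w => by simp [Finset.mem_erase]) _
    have h4 : ∑ j : {w : Torus N // w ≠ 0}, lap N i (j : Torus N) * x (j : Torus N)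
        = Δ0.mulVec v ⟨i, hi⟩ := by
      have h5 : Δ0.mulVec v ⟨i, hi⟩
          = ∑ j : {w : Torus N // w ≠ 0}, lap N i (j : Torus N) * v j := rfl
      rw [h5]
      exact Finset.sum_congr rfl fun j _ => by rw [hxv j]
    rw [h1, ← h2, h3, h4, hv0]
    simp [hx0]
  have hq : x ⬝ᵥ (lap N).mulVec x = 0 := by
    refine Finset.sum_eq_zero fun i _ => ?_
    by_cases h : i = 0
    · subst h; rw [hx0]; ring
    · rw [hlapx i h]; ring
  have hc := eq_const_of_quad_zero hN x hq
  apply hv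
  funext j
  have := hc (j : Torus N)
  rw [hxv j, hx0] at this
  exact this

noncomputable def Bc (N : ℕ) (c : ℝ) : Matrix (Torus N) (Torus N) ℝ :=
  1 - c • (srwKernel N - Pim N)

lemma P_mul_Pim : srwKernel N * Pim N = Pim N := by
  simpa using Ppow_mul_Pim (N := N) 1

lemma Pim_mul_P : Pim N * srwKernel N = Pim N := by
  simpa using Pim_mul_Ppow (N := N) 1

lemma key_matrix_step (t : ℕ) :
    (srwKernel N - Pim N) * (srwKernel N ^ t - Pim N) = srwKernel N ^ (t + 1) - Pim N := by
  rw [Matrix.sub_mul, Matrix.mul_sub, Matrix.mul_sub, P_mul_Pim, Pim_mul_Ppow, Pim_mul_Pim,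
    ← pow_succ']
  abel

lemma inv_card_le_one : (1 : ℝ) / (N ^ 2 : ℝ) ≤ 1 := by
  have h1 : (1 : ℝ) ≤ (N : ℝ) ^ 2 := by
    have := NeZero.one_le (n := N)
    have : (1 : ℝ) ≤ (N : ℝ) := by exact_mod_cast this
    nlinarith
  rw [div_le_one (by linarith)]
  linarith

lemma inv_card_nonneg : (0 : ℝ) ≤ 1 / (N ^ 2 : ℝ) := by positivity

lemma abs_entry_le (t : ℕ) (i j : Torus N) :
    |(srwKernel N ^ t) i j - 1 / (N ^ 2 : ℝ)| ≤ 2 := by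
  have h1 := Ppow_nonneg t i j
  have h2 := Ppow_le_one t i j
  have h3 := inv_card_le_one (N := N)
  have h4 := inv_card_nonneg (N := N)
  rw [abs_le]
  constructor <;> linarith

lemma summable_f {c : ℝ} (hc0 : 0 ≤ c) (hc1 : c < 1) (i j : Torus N) :
    Summable (fun t : ℕ => ((srwKernel N ^ t) i j - 1 / (N ^ 2 : ℝ)) * c ^ t) := by
  refine Summable.of_abs ?_
  refine Summable.of_nonneg_of_le (fun t => abs_nonneg _) (fun t => ?_)
    ((summable_geometric_of_lt_one hc0 hc1).mul_left 2)
  rw [abs_mul, abs_pow, abs_of_nonneg hc0]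
  exact mul_le_mul_of_nonneg_right (abs_entry_le t i j) (pow_nonneg hc0 t)

lemma tendsto_f {c : ℝ} (hc0 : 0 ≤ c) (hc1 : c < 1) (i j : Torus N) :
    Filter.Tendsto (fun t : ℕ => ((srwKernel N ^ t) i j - 1 / (N ^ 2 : ℝ)) * c ^ t)
      Filter.atTop (nhds 0) := by
  refine squeeze_zero_norm (a := fun t => 2 * c ^ t) (fun t => ?_) ?_
  · show |((srwKernel N ^ t) i j - 1 / (N ^ 2 : ℝ)) * c ^ t| ≤ 2 * c ^ t
    rw [abs_mul, abs_pow, abs_of_nonneg hc0]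
    exact mul_le_mul_of_nonneg_right (abs_entry_le t i j) (pow_nonneg hc0 t)
  · have := tendsto_pow_atTop_nhds_zero_of_lt_one hc0 hc1
    simpa using this.const_mul 2

lemma tsum_telescope {u : ℕ → ℝ} (hu : Summable u)
    (h0 : Filter.Tendsto u Filter.atTop (nhds 0)) : ∑' t, (u t - u (t + 1)) = u 0 := by
  have hs : Summable (fun t => u t - u (t + 1)) := hu.sub ((summable_nat_add_iff 1).2 hu)
  have h1 := hs.hasSum.tendsto_sum_nat
  have h2 : Filter.Tendsto (fun n => ∑ t ∈ Finset.range n, (u t - u (t + 1)))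
      Filter.atTop (nhds (u 0)) := by
    have he : (fun n => ∑ t ∈ Finset.range n, (u t - u (t + 1))) = fun n => u 0 - u n := by
      funext n; exact Finset.sum_range_sub' u n
    rw [he]
    simpa using tendsto_const_nhds.sub h0
  exact tendsto_nhds_unique h1 h2

noncomputable def Smat (N : ℕ) [NeZero N] (c : ℝ) : Matrix (Torus N) (Torus N) ℝ :=
  fun i j => ∑' t : ℕ, ((srwKernel N ^ t) i j - 1 / (N ^ 2 : ℝ)) * c ^ t

lemma Bc_mul_Smat {c : ℝ} (hc0 : 0 ≤ c) (hc1 : c < 1) :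
    Bc N c * Smat N c = 1 - Pim N := by
  ext i j
  rw [Matrix.mul_apply]
  have h1 : ∀ m : Torus N, Bc N c i m * Smat N c m j
      = ∑' t : ℕ, Bc N c i m * (((srwKernel N ^ t) m j - 1 / (N ^ 2 : ℝ)) * c ^ t) :=
    fun m => (tsum_mul_left).symm
  rw [Finset.sum_congr rfl fun m _ => h1 m]
  rw [← Summable.tsum_finsetSum (fun m _ => ((summable_f hc0 hc1 m j).mul_left _))]
  have hterm : ∀ t : ℕ,
      (∑ m, Bc N c i m * (((srwKernel N ^ t) m j - 1 / (N ^ 2 : ℝ)) * c ^ t))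
      = ((srwKernel N ^ t) i j - 1 / (N ^ 2 : ℝ)) * c ^ t
        - ((srwKernel N ^ (t + 1)) i j - 1 / (N ^ 2 : ℝ)) * c ^ (t + 1) := by
    intro t
    have hmul : (Bc N c * (srwKernel N ^ t - Pim N)) i j
        = ∑ m, Bc N c i m * ((srwKernel N ^ t) m j - 1 / (N ^ 2 : ℝ)) := by
      rw [Matrix.mul_apply]
      rfl
    have hB : Bc N c * (srwKernel N ^ t - Pim N)
        = (srwKernel N ^ t - Pim N) - c • (srwKernel N ^ (t + 1) - Pim N) := by
      unfold Bc
      rw [Matrix.sub_mul, Matrix.one_mul, Matrix.smul_mul, key_matrix_step]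
    calc ∑ m, Bc N c i m * (((srwKernel N ^ t) m j - 1 / (N ^ 2 : ℝ)) * c ^ t)
        = (∑ m, Bc N c i m * ((srwKernel N ^ t) m j - 1 / (N ^ 2 : ℝ))) * c ^ t := by
          rw [Finset.sum_mul]
          exact Finset.sum_congr rfl fun m _ => by ring
      _ = ((Bc N c * (srwKernel N ^ t - Pim N)) i j) * c ^ t := by rw [hmul]
      _ = (((srwKernel N ^ t) i j - 1 / (N ^ 2 : ℝ))
            - c * ((srwKernel N ^ (t + 1)) i j - 1 / (N ^ 2 : ℝ))) * c ^ t := by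
          rw [hB]
          simp [Matrix.sub_apply, Matrix.smul_apply, Pim, smul_eq_mul]
      _ = _ := by ring
  rw [tsum_congr hterm, tsum_telescope (summable_f hc0 hc1 i j) (tendsto_f hc0 hc1 i j)]
  simp [Matrix.one_apply, Matrix.sub_apply, Pim]

lemma Smat_eq (hN : 2 ≤ N) {c : ℝ} (hc0 : 0 < c) (hc1 : c < 1) :
    Smat N c = (Bc N c)⁻¹ * (1 - Pim N) := by
  have hdet : IsUnit (Bc N c).det := Bdet hN hc0.le hc1.le
  calc Smat N c = ((Bc N c)⁻¹ * Bc N c) * Smat N c := by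
        rw [Matrix.nonsing_inv_mul _ hdet, Matrix.one_mul]
    _ = (Bc N c)⁻¹ * (Bc N c * Smat N c) := by rw [Matrix.mul_assoc]
    _ = _ := by rw [Bc_mul_Smat hc0.le hc1]

lemma green_eq (hN : 2 ≤ N) (i j : Torus N) :
    green N i j = ((Bc N 1)⁻¹ * (1 - Pim N)) i j := by
  have hdet1 : (Bc N 1).det ≠ 0 := (Bdet hN zero_le_one le_rfl).ne_zero
  set F : ℝ → ℝ := fun lam => ((Bc N (Real.exp (-lam)))⁻¹ * (1 - Pim N)) i j with hF
  have hBcont : Continuous fun lam : ℝ => Bc N (Real.exp (-lam)) := by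
    refine continuous_matrix fun a b => ?_
    simp only [Bc, Matrix.sub_apply, Matrix.smul_apply, smul_eq_mul]
    exact continuous_const.sub ((Real.continuous_exp.comp continuous_neg).mul continuous_const)
  have hFeq : F = fun lam => (((Bc N (Real.exp (-lam))).det)⁻¹
      * ((Matrix.adjugate (Bc N (Real.exp (-lam))) * (1 - Pim N)) i j)) := by
    funext lam
    rw [hF]
    simp only
    rw [Matrix.inv_def, Matrix.smul_mul, Matrix.smul_apply, smul_eq_mul, Ring.inverse_eq_inv]
  have hdetcont : Continuous fun lam : ℝ => (Bc N (Real.exp (-lam))).det := hBcont.matrix_det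
  have hadjcont : Continuous fun lam : ℝ =>
      (Matrix.adjugate (Bc N (Real.exp (-lam))) * (1 - Pim N)) i j :=
    (hBcont.matrix_adjugate.matrix_mul continuous_const).matrix_elem i j
  have hcontAt : ContinuousAt F 0 := by
    rw [hFeq]
    refine ContinuousAt.mul (ContinuousAt.inv₀ hdetcont.continuousAt ?_) hadjcont.continuousAt
    simpa using hdet1
  have hval : F 0 = ((Bc N 1)⁻¹ * (1 - Pim N)) i j := by
    rw [hF]; simp
  have heq : (fun lam : ℝ =>
      ∑' t : ℕ, ((srwKernel N ^ t) i j - 1 / (N ^ 2 : ℝ)) * Real.exp (-lam * t))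
      =ᶠ[nhdsWithin (0 : ℝ) (Set.Ioi 0)] F := by
    filter_upwards [self_mem_nhdsWithin] with lam hlam
    have hlam' : (0 : ℝ) < lam := hlam
    have hc0 : (0 : ℝ) < Real.exp (-lam) := Real.exp_pos _
    have hc1 : Real.exp (-lam) < 1 := Real.exp_lt_one_iff.2 (by linarith)
    have ht : ∀ t : ℕ, ((srwKernel N ^ t) i j - 1 / (N ^ 2 : ℝ)) * Real.exp (-lam * t)
        = ((srwKernel N ^ t) i j - 1 / (N ^ 2 : ℝ)) * (Real.exp (-lam)) ^ t := by
      intro t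
      rw [show -lam * (t : ℝ) = (t : ℝ) * (-lam) by ring, Real.exp_nat_mul]
    calc ∑' t : ℕ, ((srwKernel N ^ t) i j - 1 / (N ^ 2 : ℝ)) * Real.exp (-lam * t)
        = Smat N (Real.exp (-lam)) i j := tsum_congr ht
      _ = F lam := by rw [hF]; simp only; rw [Smat_eq hN hc0 hc1]
  unfold green
  apply Filter.Tendsto.limUnder_eq
  refine Filter.Tendsto.congr' heq.symm ?_
  rw [← hval]
  exact hcontAt.tendsto.mono_left nhdsWithin_le_nhds

lemma Pim_mulVec_zero (k : Torus N → ℝ) (hk : ∑ i, k i = 0) (i : Torus N) :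
    (Pim N).mulVec k i = 0 := by
  rw [Pim_mulVec, hk, zero_div]

lemma lap_row_zero (hN : 2 ≤ N) (i : Torus N) : ∑ j, lap N i j = 0 := by
  have h := lap_mulVec hN (fun _ => (1 : ℝ)) i
  have h2 : (lap N).mulVec (fun _ => (1 : ℝ)) i = ∑ j, lap N i j := by
    show ∑ j, lap N i j * 1 = _
    exact Finset.sum_congr rfl fun j _ => mul_one _
  rw [h2] at h
  rw [h]
  norm_num

lemma Gmat_identity (hN : 2 ≤ N) (k : Torus N → ℝ) (hk : ∑ i, k i = 0) (i : Torus N) :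
    (lap N).mulVec (((Bc N 1)⁻¹ * (1 - Pim N)).mulVec k) i = -4 * k i := by
  set Gm : Matrix (Torus N) (Torus N) ℝ := (Bc N 1)⁻¹ * (1 - Pim N) with hGm
  have hdet : IsUnit (Bc N 1).det := Bdet hN zero_le_one le_rfl
  have hBG : Bc N 1 * Gm = 1 - Pim N := by
    rw [hGm, ← Matrix.mul_assoc, Matrix.mul_nonsing_inv _ hdet, Matrix.one_mul]
  have hBc1 : Bc N 1 = 1 - (srwKernel N - Pim N) := by rw [Bc, one_smul]
  have hPimB : Pim N * Bc N 1 = Pim N := by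
    rw [hBc1, Matrix.mul_sub, Matrix.mul_one, Matrix.mul_sub, Pim_mul_P, Pim_mul_Pim]
    abel
  have hPimBinv : Pim N * (Bc N 1)⁻¹ = Pim N := by
    calc Pim N * (Bc N 1)⁻¹ = (Pim N * Bc N 1) * (Bc N 1)⁻¹ := by rw [hPimB]
      _ = Pim N * (Bc N 1 * (Bc N 1)⁻¹) := by rw [Matrix.mul_assoc]
      _ = Pim N := by rw [Matrix.mul_nonsing_inv _ hdet, Matrix.mul_one]
  have hPimG : Pim N * Gm = 0 := by
    rw [hGm, ← Matrix.mul_assoc, hPimBinv, Matrix.mul_sub, Matrix.mul_one, Pim_mul_Pim, sub_self]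
  have hPG : srwKernel N * Gm = Gm - 1 + Pim N := by
    have h1 : (1 - srwKernel N) * Gm = 1 - Pim N := by
      have : (1 : Matrix (Torus N) (Torus N) ℝ) - srwKernel N = Bc N 1 - Pim N := by
        rw [hBc1]; abel
      rw [this, Matrix.sub_mul, hBG, hPimG, sub_zero]
    have h2 : Gm - srwKernel N * Gm = 1 - Pim N := by
      rw [← h1, Matrix.sub_mul, Matrix.one_mul]
    have h3 : Gm = (1 - Pim N) + srwKernel N * Gm := sub_eq_iff_eq_add.1 h2
    conv_rhs => rw [h3]
    abel
  set y : Torus N → ℝ := Gm.mulVec k with hy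
  have hPy : (srwKernel N).mulVec y = y - k + (Pim N).mulVec k := by
    rw [hy, Matrix.mulVec_mulVec, hPG, Matrix.add_mulVec, Matrix.sub_mulVec,
      Matrix.one_mulVec]
  have hPy' : ∀ m, (srwKernel N).mulVec y m = y m - k m := by
    intro m
    rw [hPy]
    simp [Pim_mulVec_zero k hk m]
  have h1 := lap_mulVec hN y i
  have h2 := P_mulVec y i
  have h3 := hPy' i
  rw [h2] at h3
  rw [h1]
  linarith

end aux

/-- For `k` in the hyperplane `K_Λ = {k : ∑_i k_i = 0}`, writing `k_{0ᶜ}` for the restriction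
to `Λ∖{0}`: `−4 k_{0ᶜ}ᵀ (Δ_{0ᶜ0ᶜ})⁻¹ k_{0ᶜ} = kᵀ G k`. -/
theorem stmt9 (N : ℕ) [NeZero N] (hN : 2 ≤ N) (k : Torus N → ℝ)
    (hk : ∑ i : Torus N, k i = 0) :
    let Δ0 : Matrix {v : Torus N // v ≠ 0} {v : Torus N // v ≠ 0} ℝ :=
      fun i j => lap N (i : Torus N) (j : Torus N)
    (-4 : ℝ) * ((fun i : {v : Torus N // v ≠ 0} => k (i : Torus N)) ⬝ᵥ
          Δ0⁻¹.mulVec (fun i : {v : Torus N // v ≠ 0} => k (i : Torus N)))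
      = ∑ i : Torus N, ∑ j : Torus N, k i * green N i j * k j := by
  intro Δ0
  have hdet : IsUnit Δ0.det := lapSub_det hN
  set Gm : Matrix (Torus N) (Torus N) ℝ := (Bc N 1)⁻¹ * (1 - Pim N) with hGm
  set y : Torus N → ℝ := Gm.mulVec k with hy
  have hlapy : ∀ i, (lap N).mulVec y i = -4 * k i := fun i => Gmat_identity hN k hk i
  set z : {v : Torus N // v ≠ 0} → ℝ := fun i => y (i : Torus N) - y 0 with hz
  set k0 : {v : Torus N // v ≠ 0} → ℝ := fun i => k (i : Torus N) with hk0
  have hΔz : Δ0.mulVec z = fun i => -4 * k0 i := by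
    funext i
    have e1 : Δ0.mulVec z i
        = ∑ j : {w : Torus N // w ≠ 0}, lap N (i : Torus N) (j : Torus N)
            * (y (j : Torus N) - y 0) := rfl
    have e2 : ∑ j : {w : Torus N // w ≠ 0}, lap N (i : Torus N) (j : Torus N)
            * (y (j : Torus N) - y 0)
        = ∑ j ∈ Finset.univ.erase 0, lap N (i : Torus N) j * (y j - y 0) :=
      (Finset.sum_subtype (p := fun w : Torus N => w ≠ 0) (Finset.univ.erase 0)
        (fun w => by simp [Finset.mem_erase])
        (fun j => lap N (i : Torus N) j * (y j - y 0))).symm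
    have e3 : ∑ j ∈ Finset.univ.erase 0, lap N (i : Torus N) j * (y j - y 0)
          + lap N (i : Torus N) 0 * (y 0 - y 0)
        = ∑ j : Torus N, lap N (i : Torus N) j * (y j - y 0) :=
      Finset.sum_erase_add _ _ (Finset.mem_univ 0)
    have e4 : ∑ j : Torus N, lap N (i : Torus N) j * (y j - y 0)
        = (∑ j, lap N (i : Torus N) j * y j) - (∑ j, lap N (i : Torus N) j) * y 0 := by
      rw [Finset.sum_mul, ← Finset.sum_sub_distrib]
      exact Finset.sum_congr rfl fun j _ => by ring
    have e5 : (∑ j, lap N (i : Torus N) j * y j) = (lap N).mulVec y (i : Torus N) := rfl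
    have e3' : ∑ j ∈ Finset.univ.erase 0, lap N (i : Torus N) j * (y j - y 0)
        = ∑ j : Torus N, lap N (i : Torus N) j * (y j - y 0) := by
      rw [← e3]; simp
    rw [e1, e2, e3', e4, lap_row_zero hN, zero_mul, sub_zero, e5, hlapy]
  -- invert
  have hinv : Δ0⁻¹.mulVec (Δ0.mulVec z) = z := by
    rw [Matrix.mulVec_mulVec, Matrix.nonsing_inv_mul _ hdet, Matrix.one_mulVec]
  have hk0z : k0 = (-1/4 : ℝ) • (Δ0.mulVec z) := by
    funext i
    rw [hΔz]
    simp only [Pi.smul_apply, smul_eq_mul]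
    ring
  have hDk0 : Δ0⁻¹.mulVec k0 = (-1/4 : ℝ) • z := by
    rw [hk0z, Matrix.mulVec_smul, hinv]
  have hLHS : (-4 : ℝ) * (k0 ⬝ᵥ Δ0⁻¹.mulVec k0) = k0 ⬝ᵥ z := by
    rw [hDk0, dotProduct_smul]
    simp only [smul_eq_mul]
    ring
  have hk0sum : ∑ i : {v : Torus N // v ≠ 0}, k (i : Torus N) * (y (i : Torus N) - y 0)
      = ∑ i : Torus N, k i * y i := by
    have f2 : ∑ i : {v : Torus N // v ≠ 0}, k (i : Torus N) * (y (i : Torus N) - y 0)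
        = ∑ i ∈ Finset.univ.erase 0, k i * (y i - y 0) :=
      (Finset.sum_subtype (p := fun w : Torus N => w ≠ 0) (Finset.univ.erase 0)
        (fun w => by simp [Finset.mem_erase])
        (fun i => k i * (y i - y 0))).symm
    have f3 : ∑ i ∈ Finset.univ.erase 0, k i * (y i - y 0) + k 0 * (y 0 - y 0)
        = ∑ i : Torus N, k i * (y i - y 0) := Finset.sum_erase_add _ _ (Finset.mem_univ 0)
    have f3' : ∑ i ∈ Finset.univ.erase 0, k i * (y i - y 0)
        = ∑ i : Torus N, k i * (y i - y 0) := by rw [← f3]; simp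
    have f4 : ∑ i : Torus N, k i * (y i - y 0)
        = (∑ i, k i * y i) - (∑ i, k i) * y 0 := by
      rw [Finset.sum_mul, ← Finset.sum_sub_distrib]
      exact Finset.sum_congr rfl fun i _ => by ring
    rw [f2, f3', f4, hk, zero_mul, sub_zero]
  have hRHS : ∑ i : Torus N, ∑ j : Torus N, k i * green N i j * k j
      = ∑ i : Torus N, k i * y i := by
    refine Finset.sum_congr rfl fun i _ => ?_
    have g1 : ∀ j, green N i j = Gm i j := fun j => green_eq hN i j
    have g2 : y i = ∑ j, Gm i j * k j := rfl
    rw [g2, Finset.mul_sum]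
    exact Finset.sum_congr rfl fun j _ => by rw [g1 j]; ring
  rw [hLHS, hRHS]
  exact hk0sum
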